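/- Let $\mu\in\mathbb{R}$ and define $G(\mu,\xi) = \frac{1}{\xi^2 + \mu\xi + \mu^2 + 1}$. Then $G$ is well-defined (the denominator is strictly positive for all real $\xi$) and for $j = 0, 1, 2$ there exists a constant $C > 0$ independent of $\mu$ and $\xi$ such that $|\partial_\xi^j G(\mu,\xi)| \leq C\langle\mu\rangle^{-j-2}$, where $\langle\mu\rangle = \sqrt{1+\mu^2}$. -/

import Mathlib

theorem stmt5 :
    (∀ μ ξ : ℝ, 0 < ξ ^ 2 + μ * ξ + μ ^ 2 + 1) ∧
    ∃ C > (0 : ℝ), ∀ μ ξ : ℝ, ∀ j : ℕ, j ≤ 2 →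
      |iteratedDeriv j (fun ξ : ℝ => 1 / (ξ ^ 2 + μ * ξ + μ ^ 2 + 1)) ξ| ≤
        C * Real.sqrt (1 + μ ^ 2) ^ (-(j : ℝ) - 2) := by
  have key : ∀ μ ξ : ℝ, 0 < ξ ^ 2 + μ * ξ + μ ^ 2 + 1 := by
    intro μ ξ
    nlinarith [sq_nonneg (ξ + μ), sq_nonneg ξ, sq_nonneg μ, sq_nonneg (2*ξ + μ)]
  refine ⟨key, 40, by norm_num, ?_⟩
  intro μ ξ j hj
  set s := Real.sqrt (1 + μ ^ 2) with hs
  have hs2 : s ^ 2 = 1 + μ ^ 2 := Real.sq_sqrt (by positivity)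
  have hs0 : 0 < s := Real.sqrt_pos.mpr (by positivity)
  set d := ξ ^ 2 + μ * ξ + μ ^ 2 + 1 with hdd
  have hd0 : 0 < d := key μ ξ
  have hsd : s ^ 2 ≤ 2 * d := by rw [hs2]; nlinarith [sq_nonneg (ξ + μ), sq_nonneg ξ]
  have hw : (2 * ξ + μ) ^ 2 ≤ 4 * d := by nlinarith [sq_nonneg μ]
  have hrw : s ^ (-(j : ℝ) - 2) = (s ^ (j + 2))⁻¹ := by
    rw [show -(j : ℝ) - 2 = -((j + 2 : ℕ) : ℝ) by push_cast; ring,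
      Real.rpow_neg hs0.le, Real.rpow_natCast]
  rw [hrw, ← div_eq_mul_inv, le_div_iff₀ (by positivity)]
  -- derivative facts
  have hfun : (fun ξ : ℝ => 1 / (ξ ^ 2 + μ * ξ + μ ^ 2 + 1))
      = fun x : ℝ => (x ^ 2 + μ * x + μ ^ 2 + 1)⁻¹ := by
    funext x; rw [one_div]
  have hg : ∀ x : ℝ, HasDerivAt (fun x : ℝ => x ^ 2 + μ * x + μ ^ 2 + 1) (2 * x + μ) x := by
    intro x
    have h := ((hasDerivAt_pow 2 x).add ((hasDerivAt_id x).const_mul μ)).add_const (μ ^ 2 + 1)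
    convert h using 1
    · rfl
    · rfl
    · funext y; simp; ring
    · norm_num
  have hf1 : ∀ x : ℝ, HasDerivAt (fun x : ℝ => (x ^ 2 + μ * x + μ ^ 2 + 1)⁻¹)
      (-(2 * x + μ) / (x ^ 2 + μ * x + μ ^ 2 + 1) ^ 2) x := fun x => (hg x).inv (key μ x).ne'
  have hderiv : deriv (fun x : ℝ => (x ^ 2 + μ * x + μ ^ 2 + 1)⁻¹)
      = fun x : ℝ => -(2 * x + μ) / (x ^ 2 + μ * x + μ ^ 2 + 1) ^ 2 :=
    funext fun x => (hf1 x).deriv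
  interval_cases j
  · -- j = 0
    rw [iteratedDeriv_zero]
    have : |1 / d| = 1 / d := abs_of_pos (by positivity)
    rw [this, div_mul_eq_mul_div, div_le_iff₀ hd0]
    norm_num
    linarith
  · -- j = 1
    rw [iteratedDeriv_one, hfun, hderiv]
    have habs : |(-(2 * ξ + μ) / d ^ 2)| = |2 * ξ + μ| / d ^ 2 := by
      rw [abs_div, abs_neg, abs_of_pos (by positivity : (0:ℝ) < d ^ 2)]
    rw [habs, div_mul_eq_mul_div, div_le_iff₀ (by positivity)]
    have h1 : (|2 * ξ + μ| * s ^ (1 + 2)) ^ 2 ≤ (40 * d ^ 2) ^ 2 := by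
      have h6 : s ^ 6 ≤ 8 * d ^ 3 := by
        have := pow_le_pow_left₀ (sq_nonneg s) hsd 3
        nlinarith
      have hp : (2 * ξ + μ) ^ 2 * s ^ 6 ≤ (4 * d) * (8 * d ^ 3) :=
        mul_le_mul hw h6 (by positivity) (by linarith)
      rw [mul_pow, sq_abs]
      norm_num
      nlinarith [hp, pow_nonneg hd0.le 4]
    exact (pow_le_pow_iff_left₀ (by positivity) (by positivity) two_ne_zero).mp h1
  · -- j = 2
    have h2 : iteratedDeriv 2 (fun ξ : ℝ => 1 / (ξ ^ 2 + μ * ξ + μ ^ 2 + 1)) ξ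
        = (2 * (2 * ξ + μ) ^ 2 - 2 * d) / d ^ 3 := by
      rw [show (2 : ℕ) = 1 + 1 from rfl, iteratedDeriv_succ, iteratedDeriv_one, hfun, hderiv]
      have h_num : HasDerivAt (fun x : ℝ => -(2 * x + μ)) (-2) ξ := by
        have := ((hasDerivAt_id ξ).const_mul (2:ℝ)).add_const μ
        have h' := this.neg
        exact h'.congr_deriv (by norm_num)
      have hdiv := h_num.div ((hg ξ).pow 2) (pow_ne_zero 2 hd0.ne')
      rw [(show HasDerivAt (fun x : ℝ => -(2 * x + μ) / (x ^ 2 + μ * x + μ ^ 2 + 1) ^ 2) _ ξ from hdiv).deriv]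
      simp only [Pi.pow_apply, ← hdd]
      field_simp
      ring
    rw [h2]
    have habs : |2 * (2 * ξ + μ) ^ 2 - 2 * d| ≤ 10 * d :=
      abs_le.mpr ⟨by nlinarith, by nlinarith [sq_nonneg (2 * ξ + μ)]⟩
    have hs4 : s ^ (2 + 2) ≤ 4 * d ^ 2 := by
      have : (s ^ 2) ^ 2 ≤ (2 * d) ^ 2 := pow_le_pow_left₀ (sq_nonneg s) hsd 2
      calc s ^ (2 + 2) = (s ^ 2) ^ 2 := by ring
        _ ≤ (2 * d) ^ 2 := this
        _ = 4 * d ^ 2 := by ring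
    rw [abs_div, abs_of_pos (by positivity : (0:ℝ) < d ^ 3), div_mul_eq_mul_div,
      div_le_iff₀ (by positivity)]
    have := mul_le_mul habs hs4 (by positivity) (by positivity)
    nlinarith [hd0, abs_nonneg (2 * (2 * ξ + μ) ^ 2 - 2 * d)]
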